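/- Let d : ℕ → ℕ with d i ≥ 2 for all i, and let X = Π_{i:ℕ} Fin (d i) be the boundary of the spherically homogeneous rooted tree with valency sequence d. Let G be a group of tree automorphisms of X that is spherically transitive and such that for every n and every vertex v of level n, the rigid stabilizer of v in G contains a non-identity element. Then G separates X: for every finite subset Y ⊆ X and every x ∈ X \ Y there exists g ∈ G fixing every point of Y with g(x) ≠ x. -/

import Mathlib

/-- A bijection `f` of the boundary `X = Π i, Fin (d i)` of the spherically
homogeneous rooted tree is a *tree automorphism* if for all `x y` and every
level `n`, `x` and `y` agree up to level `n` iff `f x` and `f y` do. -/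
def IsTreeAut {d : ℕ → ℕ} (f : (∀ i, Fin (d i)) → (∀ i, Fin (d i))) : Prop :=
  ∀ (x y : ∀ i, Fin (d i)) (n : ℕ),
    (∀ i < n, x i = y i) ↔ (∀ i < n, f x i = f y i)

/-- A point `x` of the boundary *passes through* the level-`n` vertex `v` if it
agrees with `v` up to level `n`. -/
def PassesThrough {d : ℕ → ℕ} {n : ℕ} (x : ∀ i, Fin (d i)) (v : ∀ i : Fin n, Fin (d i)) : Prop :=
  ∀ i : Fin n, x i = v i

/-- Let `d : ℕ → ℕ` with `d i ≥ 2`, let `X = Π i, Fin (d i)` be the boundary of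
the corresponding rooted tree, and let `G` be a group of tree automorphisms of
`X` which is spherically transitive and whose rigid vertex stabilizers are all
nontrivial (a weakly branch action).  Then `G` separates `X`: for every finite
`Y ⊆ X` and every `x ∉ Y` some `g ∈ G` fixes `Y` pointwise and moves `x`. -/
theorem weaklyBranch_separates {d : ℕ → ℕ} (hd : ∀ i, 2 ≤ d i)
    (G : Subgroup (Equiv.Perm (∀ i, Fin (d i))))
    (haut : ∀ g ∈ G, IsTreeAut g)
    (htrans : ∀ (n : ℕ) (x y : ∀ i, Fin (d i)), ∃ g ∈ G, ∀ i < n, g x i = y i)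
    (hrigid : ∀ (n : ℕ) (v : ∀ i : Fin n, Fin (d i)),
      ∃ g ∈ G, g ≠ 1 ∧ ∀ x : ∀ i, Fin (d i), ¬ PassesThrough x v → g x = x) :
    ∀ (Y : Finset (∀ i, Fin (d i))) (x : ∀ i, Fin (d i)), x ∉ Y →
      ∃ g ∈ G, (∀ y ∈ Y, g y = y) ∧ g x ≠ x := by
  classical
  intro Y x hx
  -- for each y ∈ Y choose an index where x and y differ
  have hdiff : ∀ y ∈ Y, x ≠ y := fun y hy h => hx (h ▸ hy)
  choose! idx hidx using fun y (hy : y ∈ Y) => Function.ne_iff.mp (hdiff y hy)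
  set n : ℕ := Y.sup idx + 1 with hn
  have hlt : ∀ y ∈ Y, idx y < n := fun y hy =>
    Nat.lt_succ_of_le (Finset.le_sup hy)
  -- the vertex of level n through x
  set v : ∀ i : Fin n, Fin (d i) := fun i => x i with hv
  obtain ⟨h, hhG, hne, hfix⟩ := hrigid n v
  -- a point z moved by h; it passes through v, and so does h z
  have : ∃ z, h z ≠ z := by
    by_contra hc
    push_neg at hc
    exact hne (Equiv.ext fun z => hc z)
  obtain ⟨z, hz⟩ := this
  have hzv : PassesThrough z v := by
    by_contra hc; exact hz (hfix z hc)
  have hhzv : PassesThrough (h z) v := by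
    by_contra hc
    exact hz (h.injective (hfix (h z) hc))
  obtain ⟨m, hm⟩ := Function.ne_iff.mp hz
  set N : ℕ := max n (m + 1) with hN
  obtain ⟨t, htG, ht⟩ := htrans N x z
  refine ⟨t⁻¹ * h * t, mul_mem (mul_mem (inv_mem htG) hhG) htG, ?_, ?_⟩
  · intro y hy
    -- t y does not pass through v
    have hxy : ¬ ∀ i < n, t x i = t y i := by
      intro hc
      have := ((haut t htG x y n).mpr hc) (idx y) (hlt y hy)
      exact hidx y hy this
    push_neg at hxy
    obtain ⟨i, hi, hne'⟩ := hxy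
    have htxi : t x i = z i := ht i (lt_of_lt_of_le hi (le_max_left _ _))
    have hty : ¬ PassesThrough (t y) v := by
      intro hc
      apply hne'
      rw [htxi, hc ⟨i, hi⟩]; exact hzv ⟨i, hi⟩
    have := hfix (t y) hty
    simp only [Equiv.Perm.mul_apply, Equiv.Perm.inv_def, this,
      Equiv.symm_apply_apply]
  · intro hc
    have hgx : t⁻¹ (h (t x)) = x := hc
    have h1 : h (t x) = t x := by
      have := congrArg t hgx
      simpa using this
    have h2 : ∀ i < N, h (t x) i = h z i :=
      (haut h hhG (t x) z N).mp ht
    have hmN : m < N := lt_of_lt_of_le (Nat.lt_succ_self m) (le_max_right _ _)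
    have := h2 m hmN
    rw [h1, ht m hmN] at this
    exact hm this.symm
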